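/- Let N be a monotone positively homogeneous function on nonnegative m×n matrices, and let A be an entrywise nonnegative m×n matrix with N(A) > 0. Then for every linear functional L on ℝ^{m×n} satisfying L(X) ≤ 1 for all entrywise nonnegative X of rank at most 1 with N(X) ≤ 1, one has L(A) ≤ rank₊(A)·N(A). In particular rank₊(A) ≥ N*(A)/N(A), where N*(A) is the supremum of L(A) over all such L. -/

import Mathlib

open Matrix

/-- `rank₊(A)`: the smallest `r` such that `A` is a sum of `r` entrywise-nonnegative
matrices of rank at most one. -/
noncomputable def rankPlus {m n : Type*} [Fintype m] [Fintype n]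
    (A : Matrix m n ℝ) : ℕ :=
  sInf {r | ∃ R : Fin r → Matrix m n ℝ,
    (∀ i, (R i).rank ≤ 1 ∧ ∀ k l, 0 ≤ R i k l) ∧ A = ∑ i, R i}


lemma rank_vecMulVec_le {m n : ℕ} (w : Fin m → ℝ) (v : Fin n → ℝ) :
    (vecMulVec w v).rank ≤ 1 := by
  exact Matrix.rank_vecMulVec_le w v

lemma decomp {m n : ℕ} (A : Matrix (Fin m) (Fin n) ℝ) (hA : ∀ i j, 0 ≤ A i j) :
    ∃ R : Fin (m*n) → Matrix (Fin m) (Fin n) ℝ,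
      (∀ i, (R i).rank ≤ 1 ∧ ∀ k l, 0 ≤ R i k l) ∧ A = ∑ i, R i := by
  set e := (finProdFinEquiv : Fin m × Fin n ≃ Fin (m*n))
  refine ⟨fun k => vecMulVec (Pi.single (e.symm k).1 (A (e.symm k).1 (e.symm k).2))
      (Pi.single (e.symm k).2 1), fun i => ⟨_root_.rank_vecMulVec_le _ _, fun k l => ?_⟩, ?_⟩
  · simp only [vecMulVec_apply, Pi.single_apply]
    split_ifs <;> simp [hA]
  · rw [Fintype.sum_equiv e.symm _
      (fun p : Fin m × Fin n => vecMulVec (Pi.single p.1 (A p.1 p.2)) (Pi.single p.2 1))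
      (fun k => rfl)]
    ext a b
    rw [Matrix.sum_apply]
    simp only [vecMulVec_apply, Pi.single_apply]
    rw [Fintype.sum_prod_type]
    simp [ite_and, mul_ite, eq_comm]

lemma rank_smul_le {m n : ℕ} (c : ℝ) (M : Matrix (Fin m) (Fin n) ℝ) :
    (c • M).rank ≤ M.rank := by
  have h : c • M = (diagonal (fun _ : Fin m => c)) * M := by
    ext i j; simp [diagonal, mul_apply, Finset.sum_ite_eq]
  rw [h]
  exact rank_mul_le_right _ _

/-- for a monotone positively homogeneous `N` with `N(A) > 0`, every
linear functional `L` with `L ≤ 1` on nonnegative rank-one matrices of `N`-value at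
most `1` satisfies `L(A) ≤ rank₊(A) · N(A)`; in particular `N*(A)/N(A) ≤ rank₊(A)`. -/
theorem stmt11 {m n : ℕ} (N : Matrix (Fin m) (Fin n) ℝ → ℝ)
    (hN0 : ∀ A : Matrix (Fin m) (Fin n) ℝ, (∀ i j, 0 ≤ A i j) → 0 ≤ N A)
    (hhom : ∀ A : Matrix (Fin m) (Fin n) ℝ, (∀ i j, 0 ≤ A i j) →
      ∀ c : ℝ, 0 ≤ c → N (c • A) = c * N A)
    (hmono : ∀ A B : Matrix (Fin m) (Fin n) ℝ, (∀ i j, 0 ≤ A i j) →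
      (∀ i j, 0 ≤ B i j) → (∀ i j, A i j ≤ B i j) → N A ≤ N B)
    (A : Matrix (Fin m) (Fin n) ℝ) (hA : ∀ i j, 0 ≤ A i j) (hNA : 0 < N A) :
    (∀ L : Matrix (Fin m) (Fin n) ℝ →ₗ[ℝ] ℝ,
      (∀ X : Matrix (Fin m) (Fin n) ℝ,
        (∀ i j, 0 ≤ X i j) → X.rank ≤ 1 → N X ≤ 1 → L X ≤ 1) →
      L A ≤ (rankPlus A : ℝ) * N A) ∧
    (sSup {x : ℝ | ∃ L : Matrix (Fin m) (Fin n) ℝ →ₗ[ℝ] ℝ,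
        (∀ X : Matrix (Fin m) (Fin n) ℝ,
          (∀ i j, 0 ≤ X i j) → X.rank ≤ 1 → N X ≤ 1 → L X ≤ 1) ∧ L A = x}) / N A ≤
      (rankPlus A : ℝ) := by
  have hne : (rankPlus A) ∈ {r | ∃ R : Fin r → Matrix (Fin m) (Fin n) ℝ,
      (∀ i, (R i).rank ≤ 1 ∧ ∀ k l, 0 ≤ R i k l) ∧ A = ∑ i, R i} :=
    Nat.sInf_mem ⟨m * n, decomp A hA⟩
  obtain ⟨R, hR, hsum⟩ := hne
  have main : ∀ L : Matrix (Fin m) (Fin n) ℝ →ₗ[ℝ] ℝ,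
      (∀ X : Matrix (Fin m) (Fin n) ℝ,
        (∀ i j, 0 ≤ X i j) → X.rank ≤ 1 → N X ≤ 1 → L X ≤ 1) →
      L A ≤ (rankPlus A : ℝ) * N A := by
    intro L hL
    have hterm : ∀ i, L (R i) ≤ N A := by
      intro i
      have hRle : ∀ k l, R i k l ≤ A k l := by
        intro k l
        rw [hsum, Matrix.sum_apply]
        exact Finset.single_le_sum (fun j _ => (hR j).2 k l) (Finset.mem_univ i)
      have hNR : N (R i) ≤ N A := hmono _ _ (hR i).2 hA hRle
      have hXnn : ∀ k l, 0 ≤ ((N A)⁻¹ • R i) k l := by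
        intro k l
        exact mul_nonneg (by positivity) ((hR i).2 k l)
      have hXrank : ((N A)⁻¹ • R i).rank ≤ 1 :=
        le_trans (rank_smul_le _ _) (hR i).1
      have hXN : N ((N A)⁻¹ • R i) ≤ 1 := by
        rw [hhom _ (hR i).2 _ (by positivity)]
        rw [inv_mul_le_iff₀ hNA, mul_one]
        exact hNR
      have := hL _ hXnn hXrank hXN
      rw [_root_.map_smul, smul_eq_mul, inv_mul_le_iff₀ hNA, mul_one] at this
      exact this
    calc L A = ∑ i, L (R i) := by rw [congrArg L hsum]; exact map_sum L R Finset.univ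
      _ ≤ ∑ _i : Fin (rankPlus A), N A := Finset.sum_le_sum (fun i _ => hterm i)
      _ = (rankPlus A : ℝ) * N A := by simp [mul_comm]
  refine ⟨main, ?_⟩
  rw [div_le_iff₀ hNA]
  apply csSup_le
  · exact ⟨0, 0, fun X _ _ _ => zero_le_one, LinearMap.zero_apply A⟩
  · rintro x ⟨L, hL, rfl⟩
    exact main L hL
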